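/- Let t₁, t₂ be isometries on a Hilbert space with the Cuntz O₂ relations, let p ≥ 2, and let Ω satisfy t₂^{p−1}t₁Ω = Ω. With (a_n) the recursive fermion system, one has for all l ≥ 1: a_{pl} a_{pl}* Ω = Ω, and a_{p(l−1)+i}* a_{p(l−1)+i} Ω = Ω for 1 ≤ i ≤ p−1. -/

import Mathlib

open ContinuousLinearMap

section RFSaux

variable {H : Type*} [NormedAddCommGroup H] [InnerProductSpace ℂ H] [CompleteSpace H]

/-- The completely positive map `Φ(y) = t₁ y t₁* + t₂ y t₂*`. -/
noncomputable def RFSPhi (t₁ t₂ : H →L[ℂ] H) (y : H →L[ℂ] H) : H →L[ℂ] H :=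
  t₁ * y * adjoint t₁ + t₂ * y * adjoint t₂

lemma RFS_prod_one (u v : H →L[ℂ] H) (h : adjoint u * v = 1) (x y : H →L[ℂ] H) :
    (u * x * adjoint u) * (v * y * adjoint v) = u * (x * y) * adjoint v := by
  calc (u * x * adjoint u) * (v * y * adjoint v)
      = u * (x * ((adjoint u * v) * (y * adjoint v))) := by noncomm_ring
    _ = u * (x * y) * adjoint v := by rw [h]; noncomm_ring

lemma RFS_prod_zero (u v : H →L[ℂ] H) (h : adjoint u * v = 0) (x y : H →L[ℂ] H) :
    (u * x * adjoint u) * (v * y * adjoint v) = 0 := by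
  calc (u * x * adjoint u) * (v * y * adjoint v)
      = u * (x * ((adjoint u * v) * (y * adjoint v))) := by noncomm_ring
    _ = 0 := by rw [h]; simp

lemma RFS_key (t₁ t₂ : H →L[ℂ] H)
    (h11 : adjoint t₁ * t₁ = 1) (h22 : adjoint t₂ * t₂ = 1)
    (h12 : adjoint t₁ * t₂ = 0) (h21 : adjoint t₂ * t₁ = 0)
    (x y : H →L[ℂ] H) :
    (t₁ * x * adjoint t₁ - t₂ * x * adjoint t₂) * (t₁ * y * adjoint t₁ - t₂ * y * adjoint t₂)
      = RFSPhi t₁ t₂ (x * y) := by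
  unfold RFSPhi
  rw [sub_mul, mul_sub, mul_sub,
    RFS_prod_one t₁ t₁ h11 x y, RFS_prod_zero t₁ t₂ h12 x y,
    RFS_prod_zero t₂ t₁ h21 x y, RFS_prod_one t₂ t₂ h22 x y]
  abel

lemma RFS_adj_mul (A B : H →L[ℂ] H) : adjoint (A * B) = adjoint B * adjoint A :=
  adjoint_comp A B

end RFSaux

set_option maxHeartbeats 1000000 in
/-- For the GP vector `Ω` of `P₂(2^{p-1}1)` and the recursive fermion system:
`a_{pl} a_{pl}* Ω = Ω` and `a_{p(l-1)+i}* a_{p(l-1)+i} Ω = Ω` for `1 ≤ i ≤ p-1`. -/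
theorem RFS_number_operators_on_GP_vector
    {H : Type*} [NormedAddCommGroup H] [InnerProductSpace ℂ H] [CompleteSpace H]
    (t₁ t₂ : H →L[ℂ] H)
    (h11 : adjoint t₁ * t₁ = 1) (h22 : adjoint t₂ * t₂ = 1)
    (h12 : adjoint t₁ * t₂ = 0) (h21 : adjoint t₂ * t₁ = 0)
    (hsum : t₁ * adjoint t₁ + t₂ * adjoint t₂ = 1)
    (p : ℕ) (hp : 2 ≤ p)
    (Ω : H) (hfix : (t₂ ^ (p - 1) * t₁) Ω = Ω)
    (a : ℕ → H →L[ℂ] H)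
    (ha1 : a 1 = t₁ * adjoint t₂)
    (harec : ∀ n : ℕ, 1 ≤ n →
      a (n + 1) = t₁ * a n * adjoint t₁ - t₂ * a n * adjoint t₂) :
    ∀ l : ℕ, 1 ≤ l →
      ((a (p * l) * adjoint (a (p * l))) Ω = Ω) ∧
      (∀ i : ℕ, 1 ≤ i → i ≤ p - 1 →
        (adjoint (a (p * (l - 1) + i)) * a (p * (l - 1) + i)) Ω = Ω) := by
  set Φ : (H →L[ℂ] H) → (H →L[ℂ] H) := RFSPhi t₁ t₂ with hΦdef
  -- main structural identity for the number operators
  have main : ∀ n : ℕ,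
      a (n + 1) * adjoint (a (n + 1)) = Φ^[n] (t₁ * adjoint t₁) ∧
      adjoint (a (n + 1)) * a (n + 1) = Φ^[n] (t₂ * adjoint t₂) := by
    intro n
    induction n with
    | zero =>
      have hadj1 : adjoint (a 1) = t₂ * adjoint t₁ := by
        rw [ha1, RFS_adj_mul, adjoint_adjoint]
      constructor
      · rw [hadj1, ha1, Function.iterate_zero_apply]
        calc (t₁ * adjoint t₂) * (t₂ * adjoint t₁)
            = t₁ * ((adjoint t₂ * t₂) * adjoint t₁) := by noncomm_ring
          _ = t₁ * adjoint t₁ := by rw [h22]; noncomm_ring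
      · rw [hadj1, ha1, Function.iterate_zero_apply]
        calc (t₂ * adjoint t₁) * (t₁ * adjoint t₂)
            = t₂ * ((adjoint t₁ * t₁) * adjoint t₂) := by noncomm_ring
          _ = t₂ * adjoint t₂ := by rw [h11]; noncomm_ring
    | succ n ih =>
      have hrec := harec (n + 1) (by omega)
      have hadjrec : adjoint (a (n + 2)) =
          t₁ * adjoint (a (n + 1)) * adjoint t₁ - t₂ * adjoint (a (n + 1)) * adjoint t₂ := by
        rw [hrec, map_sub, RFS_adj_mul, RFS_adj_mul, RFS_adj_mul, RFS_adj_mul,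
          adjoint_adjoint, adjoint_adjoint]
        noncomm_ring
      constructor
      · rw [hadjrec, hrec, RFS_key t₁ t₂ h11 h22 h12 h21,
          Function.iterate_succ_apply', ← ih.1]
      · rw [hadjrec, hrec, RFS_key t₁ t₂ h11 h22 h12 h21,
          Function.iterate_succ_apply', ← ih.2]
  -- shift lemma
  have hshift : ∀ (y : H →L[ℂ] H) (m : ℕ),
      Φ y * (t₂ ^ (m + 1) * t₁) = t₂ * (y * (t₂ ^ m * t₁)) := by
    intro y m
    show RFSPhi t₁ t₂ y * (t₂ ^ (m + 1) * t₁) = _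
    unfold RFSPhi
    rw [pow_succ']
    calc (t₁ * y * adjoint t₁ + t₂ * y * adjoint t₂) * ((t₂ * t₂ ^ m) * t₁)
        = t₁ * (y * ((adjoint t₁ * t₂) * (t₂ ^ m * t₁)))
          + t₂ * (y * ((adjoint t₂ * t₂) * (t₂ ^ m * t₁))) := by noncomm_ring
      _ = t₂ * (y * (t₂ ^ m * t₁)) := by rw [h12, h22]; simp
  -- action of iterates on Ω, up to p-1 steps
  have hvac : ∀ k : ℕ, k ≤ p - 1 → ∀ y : H →L[ℂ] H,
      (Φ^[k] y) Ω = (t₂ ^ k * (y * (t₂ ^ (p - 1 - k) * t₁))) Ω := by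
    intro k
    induction k with
    | zero =>
      intro _ y
      simp only [Function.iterate_zero_apply, Nat.sub_zero, pow_zero, one_mul, mul_apply_eq_comp, hfix]
    | succ n ih =>
      intro hn y
      rw [Function.iterate_succ_apply, ih (by omega) (Φ y)]
      have hm : p - 1 - n = (p - 1 - (n + 1)) + 1 := by omega
      have hop : t₂ ^ n * (Φ y * (t₂ ^ (p - 1 - n) * t₁))
          = t₂ ^ (n + 1) * (y * (t₂ ^ (p - 1 - (n + 1)) * t₁)) := by
        rw [hm, hshift, pow_succ, mul_assoc]
      rw [hop]
  -- full-period action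
  have hΦp : ∀ y : H →L[ℂ] H, (Φ^[p] y) Ω = (t₂ ^ (p - 1) * t₁) (y Ω) := by
    intro y
    have hp1 : p = (p - 1) + 1 := by omega
    rw [hp1, Function.iterate_succ_apply, hvac (p - 1) le_rfl (Φ y)]
    have h0 : p - 1 - (p - 1) = 0 := by omega
    have hΦyt : Φ y * (t₂ ^ (0:ℕ) * t₁) = t₁ * y := by
      show RFSPhi t₁ t₂ y * (t₂ ^ (0:ℕ) * t₁) = t₁ * y
      unfold RFSPhi
      calc (t₁ * y * adjoint t₁ + t₂ * y * adjoint t₂) * (t₂ ^ (0:ℕ) * t₁)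
          = t₁ * (y * (adjoint t₁ * t₁)) + t₂ * (y * (adjoint t₂ * t₁)) := by
            rw [pow_zero, one_mul]; noncomm_ring
        _ = t₁ * y := by rw [h11, h21]; simp
    rw [h0, hΦyt, ← mul_assoc, mul_apply_eq_comp]
    have he : p - 1 + 1 - 1 = p - 1 := by omega
    rw [he]
  -- iterating full periods
  have hiter : ∀ (m : ℕ) (y : H →L[ℂ] H), y Ω = Ω → (Φ^[p * m] y) Ω = Ω := by
    intro m
    induction m with
    | zero => intro y hy; simpa using hy
    | succ m ih =>
      intro y hy
      have hpm : p * (m + 1) = p + p * m := by ring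
      rw [hpm, Function.iterate_add_apply, hΦp, ih y hy, hfix]
  intro l hl
  obtain ⟨l', rfl⟩ : ∃ l'' : ℕ, l = l'' + 1 := ⟨l - 1, by omega⟩
  have hmul : p * (l' + 1) = p * l' + p := by ring
  constructor
  · -- a_{pl} a_{pl}* Ω = Ω
    have hn : p * (l' + 1) = (p * l' + (p - 1)) + 1 := by
      rw [hmul]; omega
    rw [hn, (main (p * l' + (p - 1))).1, Function.iterate_add_apply]
    apply hiter l'
    rw [hvac (p - 1) le_rfl]
    have h0 : p - 1 - (p - 1) = 0 := by omega
    have hop : t₂ ^ (p - 1) * ((t₁ * adjoint t₁) * (t₂ ^ (0:ℕ) * t₁)) = t₂ ^ (p - 1) * t₁ := by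
      rw [pow_zero, one_mul]
      calc t₂ ^ (p - 1) * ((t₁ * adjoint t₁) * t₁)
          = t₂ ^ (p - 1) * (t₁ * (adjoint t₁ * t₁)) := by noncomm_ring
        _ = t₂ ^ (p - 1) * t₁ := by rw [h11]; noncomm_ring
    rw [h0, hop, hfix]
  · intro i hi1 hi2
    have hn : p * (l' + 1 - 1) + i = (p * l' + (i - 1)) + 1 := by
      simp only [Nat.add_sub_cancel]; omega
    rw [hn, (main (p * l' + (i - 1))).2, Function.iterate_add_apply]
    apply hiter l'
    rw [hvac (i - 1) (by omega)]
    have hpi : p - 1 - (i - 1) = (p - i - 1) + 1 := by omega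
    have hexp : t₂ ^ (i - 1) * t₂ * t₂ ^ (p - i - 1) = t₂ ^ (p - 1) := by
      rw [← pow_succ, ← pow_add]
      congr 1; omega
    have hop : t₂ ^ (i - 1) * ((t₂ * adjoint t₂) * (t₂ ^ ((p - i - 1) + 1) * t₁))
        = t₂ ^ (p - 1) * t₁ := by
      rw [pow_succ']
      generalize t₂ ^ (i - 1) = A at hexp ⊢
      generalize t₂ ^ (p - i - 1) = B at hexp ⊢
      calc A * ((t₂ * adjoint t₂) * ((t₂ * B) * t₁))
          = A * (t₂ * ((adjoint t₂ * t₂) * (B * t₁))) := by noncomm_ring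
        _ = A * (t₂ * (B * t₁)) := by rw [h22]; noncomm_ring
        _ = (A * t₂ * B) * t₁ := by noncomm_ring
        _ = t₂ ^ (p - 1) * t₁ := by rw [hexp]
    rw [hpi, hop, hfix]
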